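/- Let R > 0, let p, q ∈ ℝ, let s ∈ (0, 1], let ε ∈ (0, s), and let D₁, D₂ > 0. Suppose f : [0, ∞) × [R, ∞) → ℝ is measurable and satisfies, for every τ ≥ 0, ∫_R^∞ r^{p−ε} f(τ, r)² dr ≤ D₁ (1+τ)^{−q} and ∫_R^∞ r^{p+s−ε} f(τ, r)² dr ≤ D₂ (1+τ)^{−q+1}. Then there is a constant C, depending only on R, s, ε, such that for all τ ≥ 0, ∫_R^∞ r^{p} f(τ, r)² dr ≤ C · max{D₁, D₂} · (1+τ)^{−q+1−s+ε}. -/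

import Mathlib

open MeasureTheory

/-- **Interpolation between two `r^p`-weighted energies.**
For `R > 0`, `s ∈ (0,1]`, `ε ∈ (0,s)` there is a constant `C` (depending only on
`R, s, ε`) such that: whenever `D₁, D₂ > 0` and a measurable `f` satisfies, for every
`τ ≥ 0`, `∫_R^∞ r^{p−ε} f(τ,r)² dr ≤ D₁ (1+τ)^{−q}` and
`∫_R^∞ r^{p+s−ε} f(τ,r)² dr ≤ D₂ (1+τ)^{−q+1}`, one has
`∫_R^∞ r^p f(τ,r)² dr ≤ C max{D₁,D₂} (1+τ)^{−q+1−s+ε}` for all `τ ≥ 0`.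
(The nonnegative integrals are interpreted as Lebesgue lower integrals in `ℝ≥0∞`.) -/
theorem rp_weighted_interpolation
    (R s ε : ℝ) (hR : 0 < R) (hs : s ∈ Set.Ioc (0:ℝ) 1) (hε : ε ∈ Set.Ioo (0:ℝ) s) :
    ∃ C > (0:ℝ), ∀ (p q D₁ D₂ : ℝ), 0 < D₁ → 0 < D₂ →
      ∀ f : ℝ → ℝ → ℝ, Measurable (Function.uncurry f) →
      (∀ τ ≥ (0:ℝ),
        ∫⁻ r in Set.Ioi R, ENNReal.ofReal (r ^ (p - ε) * (f τ r) ^ 2)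
          ≤ ENNReal.ofReal (D₁ * (1 + τ) ^ (-q))) →
      (∀ τ ≥ (0:ℝ),
        ∫⁻ r in Set.Ioi R, ENNReal.ofReal (r ^ (p + s - ε) * (f τ r) ^ 2)
          ≤ ENNReal.ofReal (D₂ * (1 + τ) ^ (-q + 1))) →
      ∀ τ ≥ (0:ℝ),
        ∫⁻ r in Set.Ioi R, ENNReal.ofReal (r ^ p * (f τ r) ^ 2)
          ≤ ENNReal.ofReal (C * max D₁ D₂ * (1 + τ) ^ (-q + 1 - s + ε)) := by
  obtain ⟨hs0, hs1⟩ := hs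
  obtain ⟨hε0, hεs⟩ := hε
  have hmaxpos : (0:ℝ) < max R 1 := lt_max_of_lt_right one_pos
  have hminpos : (0:ℝ) < min R 1 := lt_min hR one_pos
  refine ⟨(max R 1) ^ ε + (min R 1) ^ (ε - s), by positivity, ?_⟩
  intro p q D₁ D₂ hD₁ hD₂ f hf h1 h2 τ hτ
  have h1τ := h1 τ hτ
  have h2τ := h2 τ hτ
  have hRτ : (0:ℝ) < R + τ := by linarith
  have h1τ' : (0:ℝ) < 1 + τ := by linarith
  set A : ℝ := (R + τ) ^ ε with hA
  set B : ℝ := (R + τ) ^ (ε - s) with hB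
  have hA0 : 0 ≤ A := Real.rpow_nonneg hRτ.le ε
  have hB0 : 0 ≤ B := Real.rpow_nonneg hRτ.le (ε - s)
  have hfτ : Measurable (f τ) := hf.comp (measurable_const.prodMk measurable_id)
  have key : ∀ r ∈ Set.Ioi R,
      ENNReal.ofReal (r ^ p * f τ r ^ 2)
        ≤ ENNReal.ofReal (A * (r ^ (p - ε) * f τ r ^ 2))
          + ENNReal.ofReal (B * (r ^ (p + s - ε) * f τ r ^ 2)) := by
    intro r hr
    have hr0 : 0 < r := hR.trans hr
    rw [← ENNReal.ofReal_add (by positivity) (by positivity)]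
    apply ENNReal.ofReal_le_ofReal
    rcases le_or_gt r (R + τ) with h | h
    · have hpow : r ^ p ≤ A * r ^ (p - ε) := by
        have heq : r ^ p = r ^ ε * r ^ (p - ε) := by
          rw [← Real.rpow_add hr0]; ring_nf
        rw [heq]
        exact mul_le_mul_of_nonneg_right (Real.rpow_le_rpow hr0.le h hε0.le)
          (Real.rpow_nonneg hr0.le _)
      have h2' : 0 ≤ B * (r ^ (p + s - ε) * f τ r ^ 2) := by positivity
      nlinarith [sq_nonneg (f τ r)]
    · have hpow : r ^ p ≤ B * r ^ (p + s - ε) := by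
        have heq : r ^ p = r ^ (ε - s) * r ^ (p + s - ε) := by
          rw [← Real.rpow_add hr0]; ring_nf
        rw [heq]
        exact mul_le_mul_of_nonneg_right
          (Real.rpow_le_rpow_of_nonpos hRτ h.le (by linarith))
          (Real.rpow_nonneg hr0.le _)
      have h1' : 0 ≤ A * (r ^ (p - ε) * f τ r ^ 2) := by positivity
      nlinarith [sq_nonneg (f τ r)]
  have ameas1 : AEMeasurable (fun r : ℝ => ENNReal.ofReal (r ^ (p - ε) * f τ r ^ 2))
      (volume.restrict (Set.Ioi R)) := by
    have hm : Measurable fun r : ℝ =>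
        ENNReal.ofReal (Real.exp (Real.log r * (p - ε)) * f τ r ^ 2) :=
      (((Real.measurable_log.mul measurable_const).exp).mul (hfτ.pow_const 2)).ennreal_ofReal
    refine hm.aemeasurable.congr ?_
    filter_upwards [ae_restrict_mem measurableSet_Ioi] with r hr
    rw [Real.rpow_def_of_pos (hR.trans hr)]
  have step1 :
      ∫⁻ r in Set.Ioi R, ENNReal.ofReal (r ^ p * f τ r ^ 2)
        ≤ ENNReal.ofReal A * (∫⁻ r in Set.Ioi R, ENNReal.ofReal (r ^ (p - ε) * f τ r ^ 2))
          + ENNReal.ofReal B *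
            (∫⁻ r in Set.Ioi R, ENNReal.ofReal (r ^ (p + s - ε) * f τ r ^ 2)) := by
    rw [← lintegral_const_mul' _ _ ENNReal.ofReal_ne_top,
        ← lintegral_const_mul' _ _ ENNReal.ofReal_ne_top,
        ← lintegral_add_left' (ameas1.const_mul _)]
    refine setLIntegral_mono' measurableSet_Ioi fun r hr => ?_
    calc ENNReal.ofReal (r ^ p * f τ r ^ 2)
        ≤ ENNReal.ofReal (A * (r ^ (p - ε) * f τ r ^ 2))
          + ENNReal.ofReal (B * (r ^ (p + s - ε) * f τ r ^ 2)) := key r hr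
      _ = ENNReal.ofReal A * ENNReal.ofReal (r ^ (p - ε) * f τ r ^ 2)
          + ENNReal.ofReal B * ENNReal.ofReal (r ^ (p + s - ε) * f τ r ^ 2) := by
            rw [ENNReal.ofReal_mul hA0, ENNReal.ofReal_mul hB0]
  have step2 :
      ∫⁻ r in Set.Ioi R, ENNReal.ofReal (r ^ p * f τ r ^ 2)
        ≤ ENNReal.ofReal (A * (D₁ * (1 + τ) ^ (-q)) + B * (D₂ * (1 + τ) ^ (-q + 1))) := by
    refine step1.trans ?_
    rw [ENNReal.ofReal_add (by positivity) (by positivity),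
        ENNReal.ofReal_mul hA0, ENNReal.ofReal_mul hB0]
    exact add_le_add (mul_le_mul_right h1τ _) (mul_le_mul_right h2τ _)
  refine step2.trans (ENNReal.ofReal_le_ofReal ?_)
  set M : ℝ := max D₁ D₂ with hM
  have hM1 : D₁ ≤ M := le_max_left _ _
  have hM2 : D₂ ≤ M := le_max_right _ _
  have hM0 : 0 < M := lt_of_lt_of_le hD₁ hM1
  set T : ℝ := (1 + τ) ^ (-q + 1 - s + ε) with hT
  have hT0 : 0 ≤ T := Real.rpow_nonneg h1τ'.le _
  have t1 : A * (D₁ * (1 + τ) ^ (-q)) ≤ (max R 1) ^ ε * M * T := by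
    have hAle : A ≤ (max R 1) ^ ε * (1 + τ) ^ ε := by
      rw [← Real.mul_rpow hmaxpos.le h1τ'.le]
      apply Real.rpow_le_rpow hRτ.le _ hε0.le
      rcases le_total R 1 with h | h
      · rw [max_eq_right h]; nlinarith
      · rw [max_eq_left h]; nlinarith
    have hexp : (1 + τ) ^ ε * (1 + τ) ^ (-q) ≤ T := by
      rw [← Real.rpow_add h1τ']
      exact Real.rpow_le_rpow_of_exponent_le (by linarith) (by linarith)
    calc A * (D₁ * (1 + τ) ^ (-q))
        ≤ ((max R 1) ^ ε * (1 + τ) ^ ε) * (M * (1 + τ) ^ (-q)) := by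
          apply mul_le_mul hAle (mul_le_mul_of_nonneg_right hM1
            (Real.rpow_nonneg h1τ'.le _)) (by positivity) (by positivity)
      _ = (max R 1) ^ ε * M * ((1 + τ) ^ ε * (1 + τ) ^ (-q)) := by ring
      _ ≤ (max R 1) ^ ε * M * T := by
          apply mul_le_mul_of_nonneg_left hexp (by positivity)
  have t2 : B * (D₂ * (1 + τ) ^ (-q + 1)) ≤ (min R 1) ^ (ε - s) * M * T := by
    have hBle : B ≤ (min R 1) ^ (ε - s) * (1 + τ) ^ (ε - s) := by
      rw [← Real.mul_rpow hminpos.le h1τ'.le]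
      apply Real.rpow_le_rpow_of_nonpos (by positivity) _ (by linarith)
      rcases le_total R 1 with h | h
      · rw [min_eq_left h]; nlinarith
      · rw [min_eq_right h]; nlinarith
    have hexp : (1 + τ) ^ (ε - s) * (1 + τ) ^ (-q + 1) = T := by
      rw [← Real.rpow_add h1τ', hT]; ring_nf
    calc B * (D₂ * (1 + τ) ^ (-q + 1))
        ≤ ((min R 1) ^ (ε - s) * (1 + τ) ^ (ε - s)) * (M * (1 + τ) ^ (-q + 1)) := by
          apply mul_le_mul hBle (mul_le_mul_of_nonneg_right hM2
            (Real.rpow_nonneg h1τ'.le _)) (by positivity) (by positivity)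
      _ = (min R 1) ^ (ε - s) * M * ((1 + τ) ^ (ε - s) * (1 + τ) ^ (-q + 1)) := by ring
      _ = (min R 1) ^ (ε - s) * M * T := by rw [hexp]
  calc A * (D₁ * (1 + τ) ^ (-q)) + B * (D₂ * (1 + τ) ^ (-q + 1))
      ≤ (max R 1) ^ ε * M * T + (min R 1) ^ (ε - s) * M * T := add_le_add t1 t2
    _ = ((max R 1) ^ ε + (min R 1) ^ (ε - s)) * M * T := by ring
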